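/- arXiv:0705.2095 — 3 statements merged into one kernel-verified Lean document; each statement's English description precedes it below -/
import Mathlib

section
/- For every positive integer n, the cluster V_n = {φ ∈ 𝒢 : φ(u) = u(0) for all u ∈ 𝒜_n} is an ideal of the commutative ring 𝒢 of characters: V_n is an additive subgroup of (𝒢, ⊕, θ), and for every character φ ∈ 𝒢 and every ψ ∈ V_n the dot-convolution φ⊙ψ belongs to V_n. -/
open Function

noncomputable section

/-- The subalgebra of `ℤ → ℂ` consisting of all periodic functions. -/
def PerFun : Subalgebra ℂ (ℤ → ℂ) where
  carrier := {u | ∃ p : ℤ, 0 < p ∧ Function.Periodic u p}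
  add_mem' := by
    rintro u v ⟨p, hp, hu⟩ ⟨q, hq, hv⟩
    refine ⟨p * q, mul_pos hp hq, ?_⟩
    have hu' : Function.Periodic u (p * q) := by simpa [mul_comm] using hu.int_mul q
    have hv' : Function.Periodic v (p * q) := hv.int_mul p
    exact hu'.add hv'
  mul_mem' := by
    rintro u v ⟨p, hp, hu⟩ ⟨q, hq, hv⟩
    refine ⟨p * q, mul_pos hp hq, ?_⟩
    have hu' : Function.Periodic u (p * q) := by simpa [mul_comm] using hu.int_mul q
    have hv' : Function.Periodic v (p * q) := hv.int_mul p
    exact hu'.mul hv'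
  one_mem' := ⟨1, one_pos, fun _ => rfl⟩
  zero_mem' := ⟨1, one_pos, fun _ => rfl⟩
  algebraMap_mem' := fun c => ⟨1, one_pos, fun _ => rfl⟩

/-- `u` belongs to the subalgebra `𝒜_p` of `p`-periodic functions. -/
def InAp (p : ℤ) (u : ↥PerFun) : Prop := Function.Periodic (u : ℤ → ℂ) p

/-- A character of the algebra `𝒜` of periodic functions: a nonzero
`ℂ`-linear multiplicative functional. -/
def IsChar (ψ : ↥PerFun → ℂ) : Prop :=
  (∀ u v, ψ (u + v) = ψ u + ψ v) ∧
  (∀ (c : ℂ) (u), ψ (c • u) = c * ψ u) ∧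
  (∀ u v, ψ (u * v) = ψ u * ψ v) ∧
  ψ ≠ 0

lemma shiftAdd_mem (u : ↥PerFun) (x : ℤ) :
    (fun y => (u : ℤ → ℂ) (x + y)) ∈ PerFun := by
  obtain ⟨p, hp, hu⟩ := u.2
  refine ⟨p, hp, fun y => ?_⟩
  show (u : ℤ → ℂ) (x + (y + p)) = (u : ℤ → ℂ) (x + y)
  rw [← add_assoc]
  exact hu (x + y)

/-- For `u ∈ 𝒜`, the function `y ↦ u (x + y)`, as an element of `𝒜`. -/
def shiftAdd (u : ↥PerFun) (x : ℤ) : ↥PerFun :=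
  ⟨fun y => (u : ℤ → ℂ) (x + y), shiftAdd_mem u x⟩

lemma shiftMul_mem (u : ↥PerFun) (x : ℤ) :
    (fun y => (u : ℤ → ℂ) (x * y)) ∈ PerFun := by
  obtain ⟨p, hp, hu⟩ := u.2
  refine ⟨p, hp, fun y => ?_⟩
  show (u : ℤ → ℂ) (x * (y + p)) = (u : ℤ → ℂ) (x * y)
  rw [mul_add]
  exact (hu.int_mul x) (x * y)

/-- For `u ∈ 𝒜`, the function `y ↦ u (x * y)`, as an element of `𝒜`. -/
def shiftMul (u : ↥PerFun) (x : ℤ) : ↥PerFun :=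
  ⟨fun y => (u : ℤ → ℂ) (x * y), shiftMul_mem u x⟩

lemma negArg_mem (u : ↥PerFun) :
    (fun y => (u : ℤ → ℂ) (-y)) ∈ PerFun := by
  obtain ⟨p, hp, hu⟩ := u.2
  refine ⟨p, hp, fun y => ?_⟩
  show (u : ℤ → ℂ) (-(y + p)) = (u : ℤ → ℂ) (-y)
  rw [neg_add, ← sub_eq_add_neg]
  exact hu.sub_eq (-y)

/-- For `u ∈ 𝒜`, the function `x ↦ u (-x)`, as an element of `𝒜`. -/
def negArg (u : ↥PerFun) : ↥PerFun :=
  ⟨fun y => (u : ℤ → ℂ) (-y), negArg_mem u⟩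

lemma plusInner_mem (ψ : ↥PerFun → ℂ) (u : ↥PerFun) :
    (fun x => ψ (shiftAdd u x)) ∈ PerFun := by
  obtain ⟨p, hp, hu⟩ := u.2
  refine ⟨p, hp, fun x => ?_⟩
  show ψ (shiftAdd u (x + p)) = ψ (shiftAdd u x)
  congr 1
  apply Subtype.ext
  funext y
  show (u : ℤ → ℂ) (x + p + y) = (u : ℤ → ℂ) (x + y)
  rw [show x + p + y = x + y + p by ring]
  exact hu (x + y)

lemma dotInner_mem (ψ : ↥PerFun → ℂ) (u : ↥PerFun) :
    (fun x => ψ (shiftMul u x)) ∈ PerFun := by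
  obtain ⟨p, hp, hu⟩ := u.2
  refine ⟨p, hp, fun x => ?_⟩
  show ψ (shiftMul u (x + p)) = ψ (shiftMul u x)
  congr 1
  apply Subtype.ext
  funext y
  show (u : ℤ → ℂ) ((x + p) * y) = (u : ℤ → ℂ) (x * y)
  rw [show (x + p) * y = x * y + y * p by ring]
  exact (hu.int_mul y) (x * y)

/-- The plus-convolution `(φ ⊕ ψ)(u) = φ (x ↦ ψ (y ↦ u (x + y)))`. -/
def plusConv (φ ψ : ↥PerFun → ℂ) : ↥PerFun → ℂ :=
  fun u => φ ⟨fun x => ψ (shiftAdd u x), plusInner_mem ψ u⟩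

/-- The dot-convolution `(φ ⊙ ψ)(u) = φ (x ↦ ψ (y ↦ u (x * y)))`. -/
def dotConv (φ ψ : ↥PerFun → ℂ) : ↥PerFun → ℂ :=
  fun u => φ ⟨fun x => ψ (shiftMul u x), dotInner_mem ψ u⟩

/-- The reflection `(⊖ φ)(u) = φ (x ↦ u (-x))`. -/
def reflect (φ : ↥PerFun → ℂ) : ↥PerFun → ℂ :=
  fun u => φ (negArg u)

/-- The functional `θ : u ↦ u 0`. -/
def theta : ↥PerFun → ℂ := fun u => (u : ℤ → ℂ) 0

/-- The functional `ε : u ↦ u 1`. -/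
def eps : ↥PerFun → ℂ := fun u => (u : ℤ → ℂ) 1


/-- The cluster `V_n = {φ ∈ 𝒢 : φ u = u 0 for all u ∈ 𝒜_n}`. -/
def Vcl (n : ℤ) : Set (↥PerFun → ℂ) :=
  {φ | IsChar φ ∧ ∀ u, InAp n u → φ u = (u : ℤ → ℂ) 0}

lemma char_one {φ : ↥PerFun → ℂ} (h : IsChar φ) : φ 1 = 1 := by
  obtain ⟨hadd, hsmul, hmul, hne⟩ := h
  have h1 : φ 1 * φ 1 = φ 1 := by rw [← hmul]; norm_num
  rcases mul_eq_zero.mp (show φ 1 * (φ 1 - 1) = 0 by linear_combination h1) with h0 | h0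
  · exfalso
    apply hne
    funext u
    have hu := hmul u 1
    rw [mul_one] at hu
    show φ u = 0
    rw [hu, h0, mul_zero]
  · exact sub_eq_zero.mp h0

lemma char_const {φ : ↥PerFun → ℂ} (h : IsChar φ) (c : ℂ) : φ (c • 1) = c := by
  rw [h.2.1 c 1, char_one h, mul_one]

lemma shiftAdd_add (u v : ↥PerFun) (x : ℤ) :
    shiftAdd (u + v) x = shiftAdd u x + shiftAdd v x := by
  apply Subtype.ext; funext y; rfl

lemma shiftAdd_smul (c : ℂ) (u : ↥PerFun) (x : ℤ) :
    shiftAdd (c • u) x = c • shiftAdd u x := by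
  apply Subtype.ext; funext y; rfl

lemma shiftAdd_mul (u v : ↥PerFun) (x : ℤ) :
    shiftAdd (u * v) x = shiftAdd u x * shiftAdd v x := by
  apply Subtype.ext; funext y; rfl

lemma shiftAdd_one (x : ℤ) : shiftAdd 1 x = 1 := by
  apply Subtype.ext; funext y; rfl

lemma shiftMul_add (u v : ↥PerFun) (x : ℤ) :
    shiftMul (u + v) x = shiftMul u x + shiftMul v x := by
  apply Subtype.ext; funext y; rfl

lemma shiftMul_smul (c : ℂ) (u : ↥PerFun) (x : ℤ) :
    shiftMul (c • u) x = c • shiftMul u x := by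
  apply Subtype.ext; funext y; rfl

lemma shiftMul_mul (u v : ↥PerFun) (x : ℤ) :
    shiftMul (u * v) x = shiftMul u x * shiftMul v x := by
  apply Subtype.ext; funext y; rfl

lemma shiftMul_one (x : ℤ) : shiftMul 1 x = 1 := by
  apply Subtype.ext; funext y; rfl

lemma negArg_add (u v : ↥PerFun) : negArg (u + v) = negArg u + negArg v := by
  apply Subtype.ext; funext y; rfl

lemma negArg_smul (c : ℂ) (u : ↥PerFun) : negArg (c • u) = c • negArg u := by
  apply Subtype.ext; funext y; rfl

lemma negArg_mul (u v : ↥PerFun) : negArg (u * v) = negArg u * negArg v := by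
  apply Subtype.ext; funext y; rfl

lemma negArg_one : negArg 1 = 1 := by
  apply Subtype.ext; funext y; rfl

lemma isChar_plusConv {φ ψ : ↥PerFun → ℂ} (hφ : IsChar φ) (hψ : IsChar ψ) :
    IsChar (plusConv φ ψ) := by
  obtain ⟨φa, φs, φm, φne⟩ := hφ
  obtain ⟨ψa, ψs, ψm, ψne⟩ := hψ
  refine ⟨?_, ?_, ?_, ?_⟩
  · intro u v
    have : (⟨fun x => ψ (shiftAdd (u + v) x), plusInner_mem ψ (u + v)⟩ : ↥PerFun)
        = ⟨fun x => ψ (shiftAdd u x), plusInner_mem ψ u⟩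
          + ⟨fun x => ψ (shiftAdd v x), plusInner_mem ψ v⟩ := by
      apply Subtype.ext; funext x
      show ψ (shiftAdd (u + v) x) = ψ (shiftAdd u x) + ψ (shiftAdd v x)
      rw [shiftAdd_add, ψa]
    unfold plusConv
    rw [this, φa]
  · intro c u
    have : (⟨fun x => ψ (shiftAdd (c • u) x), plusInner_mem ψ (c • u)⟩ : ↥PerFun)
        = c • ⟨fun x => ψ (shiftAdd u x), plusInner_mem ψ u⟩ := by
      apply Subtype.ext; funext x
      show ψ (shiftAdd (c • u) x) = c * ψ (shiftAdd u x)
      rw [shiftAdd_smul, ψs]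
    unfold plusConv
    rw [this, φs]
  · intro u v
    have : (⟨fun x => ψ (shiftAdd (u * v) x), plusInner_mem ψ (u * v)⟩ : ↥PerFun)
        = ⟨fun x => ψ (shiftAdd u x), plusInner_mem ψ u⟩
          * ⟨fun x => ψ (shiftAdd v x), plusInner_mem ψ v⟩ := by
      apply Subtype.ext; funext x
      show ψ (shiftAdd (u * v) x) = ψ (shiftAdd u x) * ψ (shiftAdd v x)
      rw [shiftAdd_mul, ψm]
    unfold plusConv
    rw [this, φm]
  · intro h
    have h1 : plusConv φ ψ 1 = 1 := by
      unfold plusConv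
      have : (⟨fun x => ψ (shiftAdd 1 x), plusInner_mem ψ 1⟩ : ↥PerFun) = 1 := by
        apply Subtype.ext; funext x
        show ψ (shiftAdd 1 x) = 1
        rw [shiftAdd_one]
        exact char_one ⟨ψa, ψs, ψm, ψne⟩
      rw [this]
      exact char_one ⟨φa, φs, φm, φne⟩
    rw [h] at h1
    simpa using h1

lemma isChar_dotConv {φ ψ : ↥PerFun → ℂ} (hφ : IsChar φ) (hψ : IsChar ψ) :
    IsChar (dotConv φ ψ) := by
  obtain ⟨φa, φs, φm, φne⟩ := hφ
  obtain ⟨ψa, ψs, ψm, ψne⟩ := hψ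
  refine ⟨?_, ?_, ?_, ?_⟩
  · intro u v
    have : (⟨fun x => ψ (shiftMul (u + v) x), dotInner_mem ψ (u + v)⟩ : ↥PerFun)
        = ⟨fun x => ψ (shiftMul u x), dotInner_mem ψ u⟩
          + ⟨fun x => ψ (shiftMul v x), dotInner_mem ψ v⟩ := by
      apply Subtype.ext; funext x
      show ψ (shiftMul (u + v) x) = ψ (shiftMul u x) + ψ (shiftMul v x)
      rw [shiftMul_add, ψa]
    unfold dotConv
    rw [this, φa]
  · intro c u
    have : (⟨fun x => ψ (shiftMul (c • u) x), dotInner_mem ψ (c • u)⟩ : ↥PerFun)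
        = c • ⟨fun x => ψ (shiftMul u x), dotInner_mem ψ u⟩ := by
      apply Subtype.ext; funext x
      show ψ (shiftMul (c • u) x) = c * ψ (shiftMul u x)
      rw [shiftMul_smul, ψs]
    unfold dotConv
    rw [this, φs]
  · intro u v
    have : (⟨fun x => ψ (shiftMul (u * v) x), dotInner_mem ψ (u * v)⟩ : ↥PerFun)
        = ⟨fun x => ψ (shiftMul u x), dotInner_mem ψ u⟩
          * ⟨fun x => ψ (shiftMul v x), dotInner_mem ψ v⟩ := by
      apply Subtype.ext; funext x
      show ψ (shiftMul (u * v) x) = ψ (shiftMul u x) * ψ (shiftMul v x)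
      rw [shiftMul_mul, ψm]
    unfold dotConv
    rw [this, φm]
  · intro h
    have h1 : dotConv φ ψ 1 = 1 := by
      unfold dotConv
      have : (⟨fun x => ψ (shiftMul 1 x), dotInner_mem ψ 1⟩ : ↥PerFun) = 1 := by
        apply Subtype.ext; funext x
        show ψ (shiftMul 1 x) = 1
        rw [shiftMul_one]
        exact char_one ⟨ψa, ψs, ψm, ψne⟩
      rw [this]
      exact char_one ⟨φa, φs, φm, φne⟩
    rw [h] at h1
    simpa using h1

lemma isChar_reflect {φ : ↥PerFun → ℂ} (hφ : IsChar φ) : IsChar (reflect φ) := by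
  obtain ⟨φa, φs, φm, hne⟩ := hφ
  refine ⟨?_, ?_, ?_, ?_⟩
  · intro u v; unfold reflect; rw [negArg_add, φa]
  · intro c u; unfold reflect; rw [negArg_smul, φs]
  · intro u v; unfold reflect; rw [negArg_mul, φm]
  · intro h
    have h1 : reflect φ 1 = 1 := by
      unfold reflect; rw [negArg_one]; exact char_one ⟨φa, φs, φm, hne⟩
    rw [h] at h1
    simpa using h1

lemma InAp_shiftAdd {n : ℤ} {u : ↥PerFun} (hu : InAp n u) (x : ℤ) :
    InAp n (shiftAdd u x) := by
  intro y
  show (u : ℤ → ℂ) (x + (y + n)) = (u : ℤ → ℂ) (x + y)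
  rw [← add_assoc]
  exact hu (x + y)

lemma InAp_shiftMul {n : ℤ} {u : ↥PerFun} (hu : InAp n u) (x : ℤ) :
    InAp n (shiftMul u x) := by
  intro y
  show (u : ℤ → ℂ) (x * (y + n)) = (u : ℤ → ℂ) (x * y)
  rw [mul_add]
  exact (hu.int_mul x) (x * y)

lemma InAp_negArg {n : ℤ} {u : ↥PerFun} (hu : InAp n u) :
    InAp n (negArg u) := by
  intro y
  show (u : ℤ → ℂ) (-(y + n)) = (u : ℤ → ℂ) (-y)
  rw [neg_add, ← sub_eq_add_neg]
  exact hu.sub_eq (-y)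

/-- For every positive integer `n`, the cluster `V_n` is an ideal of the
commutative ring `𝒢` of characters: it is an additive subgroup (contains `θ`,
closed under `⊕` and the reflection `⊖`), and it absorbs multiplication `⊙`
by arbitrary characters. -/
theorem cluster_is_ideal (n : ℤ) (hn : 0 < n) :
    theta ∈ Vcl n ∧
    (∀ φ ψ, φ ∈ Vcl n → ψ ∈ Vcl n → plusConv φ ψ ∈ Vcl n) ∧
    (∀ φ, φ ∈ Vcl n → reflect φ ∈ Vcl n) ∧
    (∀ φ ψ, IsChar φ → ψ ∈ Vcl n → dotConv φ ψ ∈ Vcl n) := by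
  refine ⟨⟨⟨fun u v => rfl, fun c u => rfl, fun u v => rfl, ?_⟩, fun u _ => rfl⟩, ?_, ?_, ?_⟩
  · intro h
    have h1 : theta 1 = 1 := rfl
    rw [h] at h1
    simpa using h1
  · rintro φ ψ ⟨hφ, hφV⟩ ⟨hψ, hψV⟩
    refine ⟨isChar_plusConv hφ hψ, fun u hu => ?_⟩
    have hinner : (⟨fun x => ψ (shiftAdd u x), plusInner_mem ψ u⟩ : ↥PerFun) = u := by
      apply Subtype.ext; funext x
      show ψ (shiftAdd u x) = (u : ℤ → ℂ) x
      rw [hψV _ (InAp_shiftAdd hu x)]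
      show (u : ℤ → ℂ) (x + 0) = (u : ℤ → ℂ) x
      rw [add_zero]
    show φ _ = _
    rw [hinner]
    exact hφV u hu
  · rintro φ ⟨hφ, hφV⟩
    refine ⟨isChar_reflect hφ, fun u hu => ?_⟩
    show φ (negArg u) = (u : ℤ → ℂ) 0
    rw [hφV _ (InAp_negArg hu)]
    show (u : ℤ → ℂ) (-0) = (u : ℤ → ℂ) 0
    rw [neg_zero]
  · rintro φ ψ hφ ⟨hψ, hψV⟩
    refine ⟨isChar_dotConv hφ hψ, fun u hu => ?_⟩
    have hinner : (⟨fun x => ψ (shiftMul u x), dotInner_mem ψ u⟩ : ↥PerFun)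
        = ((u : ℤ → ℂ) 0) • 1 := by
      apply Subtype.ext; funext x
      show ψ (shiftMul u x) = (u : ℤ → ℂ) 0 * 1
      rw [hψV _ (InAp_shiftMul hu x), mul_one]
      show (u : ℤ → ℂ) (x * 0) = (u : ℤ → ℂ) 0
      rw [mul_zero]
    show φ _ = _
    rw [hinner]
    exact char_const hφ _

end
end

section
/- On the set 𝒢 of characters of the algebra 𝒜 of periodic functions on ℤ, the Gelfand topology (the topology generated by the subbase of all sets U_R(u;ψ) = {φ ∈ 𝒢 : |φ(u) − ψ(u)| < R} with u ∈ 𝒜, ψ ∈ 𝒢, R > 0, i.e., the topology of pointwise convergence on 𝒜) coincides with the cluster topology, namely the topology for which, at each point ψ ∈ 𝒢, the clusters V_n(ψ) = {φ ∈ 𝒢 : φ = ψ on 𝒜_n}, n ∈ ℕ⁺, form a base of neighborhoods of ψ. -/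
open Function

noncomputable section

/-- The set of characters `𝒢`, as a type. -/
def Gchar := {ψ : ↥PerFun → ℂ // IsChar ψ}

/-- The Gelfand topology on `𝒢`: generated by the subbase of all sets
`U_R(u;ψ) = {φ ∈ 𝒢 : |φ u − ψ u| < R}` with `u ∈ 𝒜`, `ψ ∈ 𝒢`, `R > 0`,
i.e. the topology of pointwise convergence on `𝒜`. -/
def gelfandTop : TopologicalSpace Gchar :=
  TopologicalSpace.generateFrom
    {S | ∃ (u : ↥PerFun) (ψ : Gchar) (R : ℝ), 0 < R ∧
      S = {φ : Gchar | ‖φ.1 u - ψ.1 u‖ < R}}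

/-- The cluster topology on `𝒢`: the topology for which at each point `ψ` the
clusters `V_n(ψ) = {φ ∈ 𝒢 : φ = ψ on 𝒜_n}`, `n ∈ ℕ⁺`, form a base of
neighborhoods of `ψ`; equivalently, the topology generated by all clusters. -/
def clusterTop : TopologicalSpace Gchar :=
  TopologicalSpace.generateFrom
    {S | ∃ (n : ℤ) (ψ : Gchar), 0 < n ∧
      S = {φ : Gchar | ∀ u, InAp n u → φ.1 u = ψ.1 u}}

/-! ### Auxiliary material for the proof -/

set_option maxHeartbeats 1000000
set_option synthInstance.maxHeartbeats 1000000

/-- The indicator of the residue class `j` modulo `n`. -/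
def eFun (n j : ℤ) : ℤ → ℂ := fun x => if (x - j) % n = 0 then 1 else 0

lemma eFun_periodic (n j : ℤ) : Function.Periodic (eFun n j) n := by
  intro x
  show (if (x + n - j) % n = 0 then (1:ℂ) else 0) = _
  rw [show x + n - j = (x - j) + 1 * n by ring, Int.add_mul_emod_self_right]
  rfl

lemma eFun_mem {n : ℤ} (hn : 0 < n) (j : ℤ) : eFun n j ∈ PerFun :=
  ⟨n, hn, eFun_periodic n j⟩

/-- The indicator of the residue class `j` modulo `n`, as an element of `𝒜`. -/
def eP {n : ℤ} (hn : 0 < n) (j : ℤ) : ↥PerFun := ⟨eFun n j, eFun_mem hn j⟩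

lemma eP_idem {n : ℤ} (hn : 0 < n) (j : ℤ) : eP hn j * eP hn j = eP hn j := by
  apply Subtype.ext
  funext x
  show eFun n j x * eFun n j x = eFun n j x
  unfold eFun
  split <;> simp

lemma isChar_zero {ψ : ↥PerFun → ℂ} (h : IsChar ψ) : ψ 0 = 0 := by
  have := h.2.1 0 0
  simpa using this

lemma isChar_sum {ψ : ↥PerFun → ℂ} (h : IsChar ψ) (s : Finset ℕ) (f : ℕ → ↥PerFun) :
    ψ (∑ j ∈ s, f j) = ∑ j ∈ s, ψ (f j) := by
  classical
  induction s using Finset.induction with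
  | empty => simpa using isChar_zero h
  | insert _ _ hx ih =>
      rw [Finset.sum_insert hx, Finset.sum_insert hx, h.1, ih]

lemma isChar_eP_zero_or_one {ψ : ↥PerFun → ℂ} (h : IsChar ψ) {n : ℤ} (hn : 0 < n) (j : ℤ) :
    ψ (eP hn j) = 0 ∨ ψ (eP hn j) = 1 := by
  have hm := h.2.2.1 (eP hn j) (eP hn j)
  rw [eP_idem hn j] at hm
  set a := ψ (eP hn j)
  have : a * (a - 1) = 0 := by linear_combination -hm
  rcases mul_eq_zero.mp this with h0 | h1
  · exact Or.inl h0
  · exact Or.inr (sub_eq_zero.mp h1)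

lemma periodic_emod {u : ℤ → ℂ} {n : ℤ} (hu : Function.Periodic u n) (x : ℤ) :
    u (x % n) = u x := by
  have := (hu.int_mul (x / n)) (x % n)
  simp only [Int.cast_id] at this
  rw [show x % n + x / n * n = x from Int.emod_add_ediv_mul x n] at this
  exact this.symm

/-- Decomposition of an `n`-periodic function as a combination of indicators. -/
lemma decomp {n : ℤ} (hn : 0 < n) (u : ↥PerFun) (hu : InAp n u) :
    u = ∑ j ∈ Finset.range n.toNat, (u : ℤ → ℂ) (j : ℤ) • eP hn (j : ℤ) := by
  apply Subtype.ext
  funext x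
  have hco : ((∑ j ∈ Finset.range n.toNat, (u : ℤ → ℂ) (j : ℤ) • eP hn (j : ℤ) : ↥PerFun) : ℤ → ℂ) x
      = ∑ j ∈ Finset.range n.toNat, (u : ℤ → ℂ) (j : ℤ) * eFun n (j : ℤ) x := by
    rw [AddSubmonoidClass.coe_finset_sum, Finset.sum_apply]
    rfl
  rw [show ((u : ↥PerFun) : ℤ → ℂ) x = (u : ℤ → ℂ) x from rfl, hco]
  -- the only nonzero term is `j = (x % n).toNat`
  have hx0 : 0 ≤ x % n := Int.emod_nonneg x (ne_of_gt hn)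
  have hxlt : x % n < n := Int.emod_lt_of_pos x hn
  set j0 : ℕ := (x % n).toNat with hj0
  have hj0z : (j0 : ℤ) = x % n := Int.toNat_of_nonneg hx0
  have hmem : j0 ∈ Finset.range n.toNat := by
    rw [Finset.mem_range]
    omega
  rw [Finset.sum_eq_single_of_mem j0 hmem]
  · have : eFun n (j0 : ℤ) x = 1 := by
      unfold eFun
      rw [if_pos]
      rw [hj0z, ← Int.emod_emod_of_dvd _ (dvd_refl n)]
      rw [Int.sub_emod, Int.emod_emod_of_dvd _ (dvd_refl n)]
      simp
    rw [this, mul_one, hj0z, periodic_emod hu]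
  · intro j hj hne
    have hjlt : (j : ℤ) < n := by
      rw [Finset.mem_range] at hj
      omega
    have : eFun n (j : ℤ) x = 0 := by
      unfold eFun
      rw [if_neg]
      intro hdvd
      have hx : x % n = (j : ℤ) % n := Int.emod_eq_emod_iff_emod_sub_eq_zero.mpr hdvd
      have hjj : (j : ℤ) % n = (j : ℤ) := Int.emod_eq_of_lt (by positivity) hjlt
      apply hne
      omega
    rw [this, mul_zero]

/-- Two characters agreeing on the indicators mod `n` agree on all of `𝒜_n`. -/
lemma char_eq_on {φ ψ : ↥PerFun → ℂ} (hφ : IsChar φ) (hψ : IsChar ψ) {n : ℤ} (hn : 0 < n)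
    (he : ∀ j ∈ Finset.range n.toNat, φ (eP hn (j : ℤ)) = ψ (eP hn (j : ℤ))) :
    ∀ u, InAp n u → φ u = ψ u := by
  intro u hu
  rw [decomp hn u hu, isChar_sum hφ, isChar_sum hψ]
  refine Finset.sum_congr rfl fun j hj => ?_
  rw [hφ.2.1, hψ.2.1, he j hj]

lemma eP_inAp {n : ℤ} (hn : 0 < n) (j : ℤ) : InAp n (eP hn j) := eFun_periodic n j

/-- The cluster `V_n(ψ)` as a finite intersection of Gelfand subbasic sets. -/
lemma cluster_eq_inter {n : ℤ} (hn : 0 < n) (ψ : Gchar) :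
    {φ : Gchar | ∀ u, InAp n u → φ.1 u = ψ.1 u}
      = ⋂ j ∈ Finset.range n.toNat,
          {φ : Gchar | ‖φ.1 (eP hn (j : ℤ)) - ψ.1 (eP hn (j : ℤ))‖ < 1} := by
  ext φ
  simp only [Set.mem_setOf_eq, Set.mem_iInter]
  constructor
  · intro h j _
    rw [h _ (eP_inAp hn (j : ℤ))]
    simp
  · intro h
    refine char_eq_on φ.2 ψ.2 hn (fun j hj => ?_)
    have h1 := isChar_eP_zero_or_one φ.2 hn (j : ℤ)
    have h2 := isChar_eP_zero_or_one ψ.2 hn (j : ℤ)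
    have habs := h j hj
    rcases h1 with h1 | h1 <;> rcases h2 with h2 | h2 <;>
      rw [h1, h2] <;> rw [h1, h2] at habs <;> simp_all

/-- On the set `𝒢` of characters of `𝒜`, the Gelfand topology coincides with
the cluster topology. -/
theorem gelfandTop_eq_clusterTop : gelfandTop = clusterTop := by
  apply le_antisymm
  · -- every cluster generator is Gelfand-open
    letI : TopologicalSpace Gchar := gelfandTop
    apply le_generateFrom
    rintro S ⟨n, ψ, hn, rfl⟩
    rw [cluster_eq_inter hn ψ]
    refine isOpen_biInter_finset fun j _ => ?_
    exact TopologicalSpace.isOpen_generateFrom_of_mem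
      ⟨eP hn (j : ℤ), ψ, 1, one_pos, rfl⟩
  · -- every Gelfand generator is cluster-open
    letI : TopologicalSpace Gchar := clusterTop
    apply le_generateFrom
    rintro S ⟨u, ψ, R, hR, rfl⟩
    rw [isOpen_iff_forall_mem_open]
    intro φ hφ
    obtain ⟨p, hp, hup⟩ := u.2
    refine ⟨{χ : Gchar | ∀ v, InAp p v → χ.1 v = φ.1 v}, ?_, ?_, ?_⟩
    · intro χ hχ
      have := hχ u hup
      simpa [Set.mem_setOf_eq, this] using hφ
    · exact TopologicalSpace.isOpen_generateFrom_of_mem ⟨p, φ, hp, rfl⟩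
    · intro v _
      rfl

end
end

section
/- The polyadic ring 𝒫 with the topology σ (the ring topology having the principal ideals 𝒢^(n), n ∈ ℕ⁺, as a base of neighborhoods of zero) is a compact Hausdorff topological space. -/
open Filter

/-- `α` is a `0`-sequence: every positive integer divides `α k`
for all but finitely many `k`. -/
def IsZeroSeq (α : ℕ → ℤ) : Prop :=
  ∀ n : ℤ, 0 < n → ∀ᶠ k in Filter.cofinite, n ∣ α k

/-- `α ≡ Sα`: the sequence `α` represents a polyadic number. -/
def RepsPolyadic (α : ℕ → ℤ) : Prop :=
  IsZeroSeq (fun k => α k - α (k + 1))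

/-- The ideal `𝒞₀` of `0`-sequences in the ring `𝒞` of integer sequences. -/
def C0 : Ideal (ℕ → ℤ) where
  carrier := {α | IsZeroSeq α}
  add_mem' := by
    intro a b ha hb n hn
    filter_upwards [ha n hn, hb n hn] with k h1 h2
    exact dvd_add h1 h2
  zero_mem' := by
    intro n hn
    exact Filter.Eventually.of_forall fun k => dvd_zero n
  smul_mem' := by
    intro c a ha n hn
    filter_upwards [ha n hn] with k h
    exact h.mul_left (c k)

/-- The quotient ring `𝒞 ⧸ 𝒞₀`. -/
abbrev CQuot := (ℕ → ℤ) ⧸ C0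

/-- The ring `𝒫` of polyadic numbers: the subring of `𝒞 ⧸ 𝒞₀` consisting
of the classes containing a sequence `α` with `α ≡ Sα`. -/
def Polyadic : Subring CQuot where
  carrier := {x | ∃ α : ℕ → ℤ, RepsPolyadic α ∧ Ideal.Quotient.mk C0 α = x}
  zero_mem' := by
    refine ⟨0, ?_, map_zero _⟩
    intro n hn
    exact Filter.Eventually.of_forall fun k => by simp
  one_mem' := by
    refine ⟨1, ?_, map_one _⟩
    intro n hn
    exact Filter.Eventually.of_forall fun k => by simp [Pi.one_apply]
  add_mem' := by
    rintro x y ⟨a, ha, rfl⟩ ⟨b, hb, rfl⟩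
    refine ⟨a + b, ?_, map_add _ _ _⟩
    intro n hn
    filter_upwards [ha n hn, hb n hn] with k h1 h2
    have : (a + b) k - (a + b) (k + 1)
        = (a k - a (k + 1)) + (b k - b (k + 1)) := by
      simp [Pi.add_apply]; ring
    rw [this]
    exact dvd_add h1 h2
  neg_mem' := by
    rintro x ⟨a, ha, rfl⟩
    refine ⟨-a, ?_, map_neg _ _⟩
    intro n hn
    filter_upwards [ha n hn] with k h1
    have : (-a) k - (-a) (k + 1) = -(a k - a (k + 1)) := by
      simp [Pi.neg_apply]; ring
    rw [this]
    exact h1.neg_right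
  mul_mem' := by
    rintro x y ⟨a, ha, rfl⟩ ⟨b, hb, rfl⟩
    refine ⟨a * b, ?_, map_mul _ _ _⟩
    intro n hn
    filter_upwards [ha n hn, hb n hn] with k h1 h2
    have : (a * b) k - (a * b) (k + 1)
        = a k * (b k - b (k + 1)) + b (k + 1) * (a k - a (k + 1)) := by
      simp [Pi.mul_apply]; ring
    rw [this]
    exact dvd_add (h2.mul_left (a k)) (h1.mul_left (b (k + 1)))

/-- The principal ideal `𝒢⁽ᵏ⁾ = {k·α : α ∈ 𝒫}` of the polyadic ring, as a set. -/
def GIdl (p : ℤ) : Set ↥Polyadic := {x | ∃ y : ↥Polyadic, x = (p : ↥Polyadic) * y}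

/-- The grid `𝒢(p;a) = {a + γ : γ ∈ 𝒢⁽ᵖ⁾}`. -/
def Grid (p : ℤ) (a : ↥Polyadic) : Set ↥Polyadic := {x | ∃ γ ∈ GIdl p, x = a + γ}

/-- The canonical embedding `𝒵 : ℤ → 𝒫`, sending `m` to the class of the
constant sequence with value `m`. -/
def Zemb (m : ℤ) : ↥Polyadic :=
  ⟨Ideal.Quotient.mk C0 (fun _ => m),
   ⟨fun _ => m, fun n hn => Filter.Eventually.of_forall fun k => by simp, rfl⟩⟩

/-- The topology `σ` on the polyadic ring `𝒫`: the ring topology having the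
principal ideals `𝒢⁽ⁿ⁾`, `n ∈ ℕ⁺`, as a base of neighborhoods of zero;
equivalently, the topology generated by all grids `𝒢(p;a)`. -/
def sigmaTop : TopologicalSpace ↥Polyadic :=
  TopologicalSpace.generateFrom
    {S | ∃ p : ℤ, 0 < p ∧ ∃ a : ↥Polyadic, S = Grid p a}


/-! ### Auxiliary lemmas -/

open Nat

local notation "mkC" => Ideal.Quotient.mk C0

lemma telescope {p : ℤ} {α : ℕ → ℤ} {N : ℕ}
    (h : ∀ k, N ≤ k → p ∣ α k - α (k + 1)) :
    ∀ k, N ≤ k → p ∣ α N - α k := by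
  intro k hk
  induction k, hk using Nat.le_induction with
  | base => simp
  | succ k hk ih =>
      have h2 : α N - α (k + 1) = (α N - α k) + (α k - α (k + 1)) := by ring
      rw [h2]
      exact dvd_add ih (h k hk)

lemma reps_eventual {α : ℕ → ℤ} (hα : RepsPolyadic α) {p : ℤ} (hp : 0 < p) :
    ∃ N, ∀ k, N ≤ k → p ∣ α N - α k := by
  have h := hα p hp
  rw [Nat.cofinite_eq_atTop, Filter.eventually_atTop] at h
  obtain ⟨N, hN⟩ := h
  exact ⟨N, telescope hN⟩

lemma sub_rep {α β : ℕ → ℤ} {x y : ↥Polyadic}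
    (hx : (x : CQuot) = mkC α) (hy : (y : CQuot) = mkC β) :
    ((x - y : ↥Polyadic) : CQuot) = mkC (fun k => α k - β k) := by
  have : ((x - y : ↥Polyadic) : CQuot) = (x : CQuot) - (y : CQuot) := rfl
  rw [this, hx, hy, ← map_sub]
  rfl

lemma reps_sub {α β : ℕ → ℤ} (hα : RepsPolyadic α) (hβ : RepsPolyadic β) :
    RepsPolyadic (fun k => α k - β k) := by
  intro n hn
  filter_upwards [hα n hn, hβ n hn] with k h1 h2
  have : (α k - β k) - (α (k + 1) - β (k + 1))
      = (α k - α (k + 1)) - (β k - β (k + 1)) := by ring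
  rw [this]
  exact dvd_sub h1 h2

lemma reps_const (m : ℤ) : RepsPolyadic (fun _ => m) := by
  intro n hn
  exact Filter.Eventually.of_forall fun k => by simp

lemma zemb_coe (m : ℤ) : ((Zemb m : ↥Polyadic) : CQuot) = mkC (fun _ => m) := rfl

lemma coe_intCast (p : ℤ) : ((p : ↥Polyadic) : CQuot) = mkC (fun _ => p) := by
  have h1 : ((p : ↥Polyadic) : CQuot) = (p : CQuot) := by push_cast; rfl
  have h2 : mkC ((p : ℤ) : ℕ → ℤ) = (p : CQuot) := map_intCast _ p
  rw [h1, ← h2]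
  rfl

/-- Key characterization: membership in `𝒢⁽ᵖ⁾` is eventual divisibility of a
representative. -/
lemma mem_GIdl_iff {α : ℕ → ℤ} (hα : RepsPolyadic α) {p : ℤ} (hp : 0 < p)
    {x : ↥Polyadic} (hx : (x : CQuot) = mkC α) :
    x ∈ GIdl p ↔ ∀ᶠ k in Filter.cofinite, p ∣ α k := by
  constructor
  · rintro ⟨y, hy⟩
    obtain ⟨β, hβ, hβmk⟩ := y.2
    have hxy : (x : CQuot) = (p : CQuot) * mkC β := by
      rw [hy]
      have : ((((p : ℤ) : ↥Polyadic) * y : ↥Polyadic) : CQuot)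
          = (((p : ℤ) : ↥Polyadic) : CQuot) * (y : CQuot) := rfl
      rw [this, coe_intCast, hβmk, ← map_intCast mkC p]
      rfl
    have hmem : (fun k => α k - p * β k) ∈ C0 := by
      have : mkC α = mkC (fun k => p * β k) := by
        rw [← hx, hxy, ← map_intCast mkC p, ← map_mul]
        rfl
      have h2 := Ideal.Quotient.eq.mp this
      convert h2 using 1
      rfl
    have := hmem p hp
    filter_upwards [this] with k hk
    have : α k = (α k - p * β k) + p * β k := by ring
    rw [this]
    exact dvd_add hk ⟨β k, rfl⟩
  · intro h
    set β : ℕ → ℤ := fun k => α k / p with hβdef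
    have hβrep : RepsPolyadic β := by
      intro n hn
      have hpn : (0 : ℤ) < p * n := mul_pos hp hn
      have h1 := hα (p * n) hpn
      rw [Nat.cofinite_eq_atTop, Filter.eventually_atTop] at h1 h ⊢
      obtain ⟨N1, hN1⟩ := h1
      obtain ⟨N2, hN2⟩ := h
      refine ⟨max N1 N2, fun k hk => ?_⟩
      have hk1 : p ∣ α k := hN2 k (le_trans (le_max_right _ _) hk)
      have hk2 : p ∣ α (k + 1) :=
        hN2 (k + 1) (le_trans (le_trans (le_max_right _ _) hk) (Nat.le_succ k))
      have hk3 : p * n ∣ α k - α (k + 1) := hN1 k (le_trans (le_max_left _ _) hk)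
      obtain ⟨a, ha⟩ := hk1
      obtain ⟨b, hb⟩ := hk2
      have hβk : β k = a := by
        rw [hβdef]; simp only []; rw [ha, Int.mul_ediv_cancel_left _ hp.ne']
      have hβk1 : β (k + 1) = b := by
        rw [hβdef]; simp only []; rw [hb, Int.mul_ediv_cancel_left _ hp.ne']
      show n ∣ β k - β (k + 1)
      rw [hβk, hβk1]
      have : α k - α (k + 1) = p * (a - b) := by rw [ha, hb]; ring
      rw [this] at hk3
      exact (mul_dvd_mul_iff_left hp.ne').mp hk3
    refine ⟨⟨mkC β, β, hβrep, rfl⟩, ?_⟩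
    apply Subtype.ext
    have hco : ((((p : ℤ) : ↥Polyadic) * ⟨mkC β, β, hβrep, rfl⟩ : ↥Polyadic) : CQuot)
        = (((p : ℤ) : ↥Polyadic) : CQuot) * mkC β := rfl
    show (x : CQuot) = _
    rw [hx, hco, coe_intCast, ← map_mul]
    apply Ideal.Quotient.eq.mpr
    intro n hn
    rw [Nat.cofinite_eq_atTop, Filter.eventually_atTop] at h ⊢
    obtain ⟨N, hN⟩ := h
    refine ⟨N, fun k hk => ?_⟩
    obtain ⟨a, ha⟩ := hN k hk
    have hβk : β k = a := by
      rw [hβdef]; simp only []; rw [ha, Int.mul_ediv_cancel_left _ hp.ne']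
    have : (α - ((fun _ => p) * β : ℕ → ℤ)) k = 0 := by
      simp only [Pi.sub_apply, Pi.mul_apply, hβk, ha]
      ring
    rw [this]
    exact dvd_zero n

lemma GIdl_sub {p : ℤ} {x y : ↥Polyadic} (hx : x ∈ GIdl p) (hy : y ∈ GIdl p) :
    x - y ∈ GIdl p := by
  obtain ⟨c, rfl⟩ := hx; obtain ⟨d, rfl⟩ := hy
  exact ⟨c - d, by ring⟩

lemma GIdl_mono {p q : ℤ} (h : p ∣ q) {x : ↥Polyadic} (hx : x ∈ GIdl q) :
    x ∈ GIdl p := by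
  obtain ⟨c, rfl⟩ := hx; obtain ⟨e, he⟩ := h
  refine ⟨(e : ↥Polyadic) * c, ?_⟩
  rw [he]; push_cast; ring

lemma mem_grid_iff {p : ℤ} {a x : ↥Polyadic} :
    x ∈ Grid p a ↔ x - a ∈ GIdl p := by
  constructor
  · rintro ⟨γ, hγ, rfl⟩; simpa using hγ
  · intro h; exact ⟨x - a, h, by ring⟩

lemma grid_eq_of_mem {p : ℤ} {a x : ↥Polyadic} (hx : x ∈ Grid p a) :
    Grid p a = Grid p x := by
  have hx' := mem_grid_iff.mp hx
  ext z
  rw [mem_grid_iff, mem_grid_iff]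
  constructor
  · intro hz
    have : z - x = (z - a) - (x - a) := by ring
    rw [this]; exact GIdl_sub hz hx'
  · intro hz
    have : z - a = (z - x) + (x - a) := by ring
    rw [this]
    obtain ⟨c, hc⟩ := hz; obtain ⟨d, hd⟩ := hx'
    exact ⟨c + d, by rw [hc, hd]; ring⟩

lemma mem_grid_self (p : ℤ) (a : ↥Polyadic) : a ∈ Grid p a :=
  mem_grid_iff.mpr ⟨0, by ring⟩

lemma zemb_sub (a b : ℤ) : Zemb a - Zemb b = Zemb (a - b) := by
  apply Subtype.ext
  rw [sub_rep (zemb_coe a) (zemb_coe b)]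
  rfl

lemma zemb_mem_GIdl {m p : ℤ} (hp : 0 < p) (h : Zemb m ∈ GIdl p) : p ∣ m := by
  have := (mem_GIdl_iff (reps_const m) hp (zemb_coe m)).mp h
  exact this.exists.choose_spec

/-- Every element lies in a grid `Grid p (Zemb j)` with `0 ≤ j < p`. -/
lemma exists_grid_int {p : ℤ} (hp : 0 < p) (x : ↥Polyadic) :
    ∃ j : ℕ, j < p.toNat ∧ x ∈ Grid p (Zemb j) := by
  obtain ⟨α, hα, hmk⟩ := x.2
  obtain ⟨N, hN⟩ := reps_eventual hα hp
  set r := α N % p with hr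
  have hr0 : 0 ≤ r := Int.emod_nonneg _ hp.ne'
  have hrp : r < p := Int.emod_lt_of_pos _ hp
  refine ⟨r.toNat, by omega, ?_⟩
  have hcast : ((r.toNat : ℤ)) = r := Int.toNat_of_nonneg hr0
  rw [hcast]
  rw [mem_grid_iff]
  have hrep : ((x - Zemb r : ↥Polyadic) : CQuot) = mkC (fun k => α k - r) :=
    sub_rep hmk.symm (zemb_coe r)
  rw [mem_GIdl_iff (reps_sub hα (reps_const r)) hp hrep]
  rw [Nat.cofinite_eq_atTop, Filter.eventually_atTop]
  refine ⟨N, fun k hk => ?_⟩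
  have h1 : p ∣ α N - α k := hN k hk
  have h2 : p ∣ α N - r := by
    rw [hr, Int.emod_def]; exact ⟨α N / p, by ring⟩
  have : α k - r = (α N - r) - (α N - α k) := by ring
  rw [this]
  exact dvd_sub h2 h1

lemma exists_not_mem_GIdl {x : ↥Polyadic} (hx : x ≠ 0) :
    ∃ p : ℤ, 0 < p ∧ x ∉ GIdl p := by
  obtain ⟨α, hα, hmk⟩ := x.2
  by_contra hcon
  push_neg at hcon
  apply hx
  have hz : IsZeroSeq α := fun n hn =>
    (mem_GIdl_iff hα hn hmk.symm).mp (hcon n hn)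
  apply Subtype.ext
  show (x : CQuot) = 0
  rw [← hmk, Ideal.Quotient.eq_zero_iff_mem]
  exact hz

/-- The polyadic ring `(𝒫, σ)` is a compact Hausdorff space. -/
theorem polyadic_compact_hausdorff :
    @CompactSpace ↥Polyadic sigmaTop ∧ @T2Space ↥Polyadic sigmaTop := by
  letI := sigmaTop
  have hopen : ∀ (p : ℤ), 0 < p → ∀ a : ↥Polyadic, IsOpen (Grid p a) := by
    intro p hp a
    exact TopologicalSpace.GenerateOpen.basic _ ⟨p, hp, a, rfl⟩
  constructor
  · -- Compactness via ultrafilter convergence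
    constructor
    rw [isCompact_iff_ultrafilter_le_nhds]
    intro F _
    have hcov : ∀ n : ℕ, ∃ r : ℤ, Grid ((n ! : ℤ)) (Zemb r) ∈ F := by
      intro n
      have hp : (0 : ℤ) < (n ! : ℤ) := by exact_mod_cast n.factorial_pos
      have huniv : (⋃ j ∈ ((Finset.range (n !) : Finset ℕ) : Set ℕ),
          Grid ((n ! : ℤ)) (Zemb (j : ℤ))) = Set.univ := by
        ext x
        simp only [Set.mem_iUnion, Set.mem_univ, iff_true, Finset.coe_range,
          Set.mem_Iio, exists_prop]
        obtain ⟨j, hj, hmem⟩ := exists_grid_int hp x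
        exact ⟨j, by simpa using hj, hmem⟩
      have hmemF : (⋃ j ∈ ((Finset.range (n !) : Finset ℕ) : Set ℕ),
          Grid ((n ! : ℤ)) (Zemb (j : ℤ))) ∈ F := by
        rw [huniv]; exact Filter.univ_mem
      obtain ⟨j, _, hj⟩ := (Ultrafilter.finite_biUnion_mem_iff
        (Finset.range (n !)).finite_toSet).mp hmemF
      exact ⟨j, hj⟩
    choose s hs using hcov
    have hcoh : ∀ n : ℕ, ((n ! : ℤ)) ∣ s (n + 1) - s n := by
      intro n
      have hne : (Grid ((n ! : ℤ)) (Zemb (s n)) ∩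
          Grid (((n + 1)! : ℤ)) (Zemb (s (n + 1)))).Nonempty :=
        Ultrafilter.nonempty_of_mem (Filter.inter_mem (hs n) (hs (n + 1)))
      obtain ⟨z, hz1, hz2⟩ := hne
      have m1 := mem_grid_iff.mp hz1
      have m2 := mem_grid_iff.mp hz2
      have hdvd : ((n ! : ℤ)) ∣ (((n + 1)! : ℕ) : ℤ) := by
        exact_mod_cast Nat.factorial_dvd_factorial (Nat.le_succ n)
      have m2' : z - Zemb (s (n + 1)) ∈ GIdl ((n ! : ℤ)) := GIdl_mono hdvd m2
      have hmem : Zemb (s (n + 1)) - Zemb (s n) ∈ GIdl ((n ! : ℤ)) := by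
        have he : Zemb (s (n + 1)) - Zemb (s n)
            = (z - Zemb (s n)) - (z - Zemb (s (n + 1))) := by ring
        rw [he]; exact GIdl_sub m1 m2'
      rw [zemb_sub] at hmem
      exact zemb_mem_GIdl (by exact_mod_cast n.factorial_pos) hmem
    have htel : ∀ n k, n ≤ k → ((n ! : ℤ)) ∣ s k - s n := by
      intro n k hk
      induction k, hk using Nat.le_induction with
      | base => simp
      | succ k hk ih =>
          have h1 : ((k ! : ℤ)) ∣ s (k + 1) - s k := hcoh k
          have h2 : ((n ! : ℤ)) ∣ ((k ! : ℤ)) := by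
            exact_mod_cast Nat.factorial_dvd_factorial hk
          have he : s (k + 1) - s n = (s (k + 1) - s k) + (s k - s n) := by ring
          rw [he]
          exact dvd_add (h2.trans h1) ih
    have hreps : RepsPolyadic s := by
      intro m hm
      rw [Nat.cofinite_eq_atTop, Filter.eventually_atTop]
      refine ⟨m.toNat, fun k hk => ?_⟩
      show m ∣ s k - s (k + 1)
      have h1 : ((k ! : ℤ)) ∣ s (k + 1) - s k := hcoh k
      have h2 : m ∣ ((k ! : ℤ)) := by
        have h3 : m.toNat ∣ k ! := Nat.dvd_factorial (by omega) hk
        have hm' : (m.toNat : ℤ) = m := Int.toNat_of_nonneg hm.le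
        rw [← hm']
        exact_mod_cast h3
      rw [show s k - s (k + 1) = -(s (k + 1) - s k) by ring]
      exact dvd_neg.mpr (h2.trans h1)
    set x : ↥Polyadic := ⟨Ideal.Quotient.mk C0 s, s, hreps, rfl⟩ with hxdef
    refine ⟨x, Set.mem_univ x, ?_⟩
    have hGridF : ∀ p : ℤ, 0 < p → Grid p x ∈ F := by
      intro p hp
      set n := p.toNat with hn
      have hn0 : 0 < n := by omega
      have hxmem : x ∈ Grid ((n ! : ℤ)) (Zemb (s n)) := by
        rw [mem_grid_iff]
        have hrep : ((x - Zemb (s n) : ↥Polyadic) : CQuot)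
            = Ideal.Quotient.mk C0 (fun k => s k - s n) :=
          sub_rep rfl (zemb_coe (s n))
        rw [mem_GIdl_iff (reps_sub hreps (reps_const (s n)))
          (by exact_mod_cast n.factorial_pos) hrep]
        rw [Nat.cofinite_eq_atTop, Filter.eventually_atTop]
        exact ⟨n, fun k hk => htel n k hk⟩
      have heq : Grid ((n ! : ℤ)) (Zemb (s n)) = Grid ((n ! : ℤ)) x :=
        grid_eq_of_mem hxmem
      have hsub : Grid ((n ! : ℤ)) x ⊆ Grid p x := by
        intro z hz
        rw [mem_grid_iff] at hz ⊢
        have hpn : p ∣ ((n ! : ℤ)) := by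
          have h1 : n ∣ n ! := Nat.dvd_factorial hn0 le_rfl
          have h2 : (n : ℤ) = p := by omega
          rw [← h2]
          exact_mod_cast h1
        exact GIdl_mono hpn hz
      exact Filter.mem_of_superset (heq ▸ hs n) hsub
    have hnhds := @TopologicalSpace.nhds_generateFrom ↥Polyadic
      {S | ∃ p : ℤ, 0 < p ∧ ∃ a : ↥Polyadic, S = Grid p a} x
    refine le_of_le_of_eq ?_ hnhds.symm
    refine le_iInf₂ fun t ht => ?_
    obtain ⟨hxt, p, hp, a, rfl⟩ := ht
    rw [Filter.le_principal_iff]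
    rw [grid_eq_of_mem hxt]
    exact hGridF p hp
  · -- Hausdorff
    constructor
    intro x y hxy
    obtain ⟨p, hp, hnot⟩ := exists_not_mem_GIdl (sub_ne_zero.mpr hxy)
    refine ⟨Grid p x, Grid p y, hopen p hp x, hopen p hp y,
      mem_grid_self p x, mem_grid_self p y, ?_⟩
    rw [Set.disjoint_left]
    intro z hzx hzy
    apply hnot
    have h1 := mem_grid_iff.mp hzx
    have h2 := mem_grid_iff.mp hzy
    have he : x - y = (z - y) - (z - x) := by ring
    rw [he]
    exact GIdl_sub h2 h1
end
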